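/- arXiv:2505.06760 — 5 statements merged into one kernel-verified Lean document; each statement's English description precedes it below -/
import Mathlib

section
/- The subspace stability measure is monotone decreasing under set inclusion: if S̃ ⊆ S and col(X_{S̃}) ⊆ col(X_S), then π(S̃) ≥ π(S), where π(S) is the |S|-th largest eigenvalue of P_{col(X_S)} · P_avg · P_{col(X_S)} for any fixed PSD matrix P_avg with all eigenvalues in [0,1], assuming the columns X_S are linearly independent. -/
open Matrix

/-- The `k`-th largest eigenvalue (1-indexed) of a real symmetric matrix `A`
(by convention `0` if `A` is not Hermitian or `k` is out of range). -/
noncomputable def kthEig {n : ℕ} (A : Matrix (Fin n) (Fin n) ℝ) (k : ℕ) : ℝ :=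
  if h : A.IsHermitian ∧ 0 < k ∧ k ≤ n then
    h.1.eigenvalues (Tuple.sort h.1.eigenvalues ⟨n - k, by obtain ⟨-, h1, h2⟩ := h; omega⟩)
  else 0

open Module Submodule

private lemma inner_eq_dot {n : ℕ} (x y : EuclideanSpace ℝ (Fin n)) :
    (inner ℝ x y : ℝ) = dotProduct x y := by
  simp [PiLp.inner_apply, dotProduct, mul_comm]

/-- Core: a unit vector in `V` that is a combination of selected eigenvectors. -/
private lemma rayleigh_core {n : ℕ} {A : Matrix (Fin n) (Fin n) ℝ} (hA : A.IsHermitian)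
    {m : ℕ} (g : Fin m → Fin n) (hg : Function.Injective g)
    (V : Submodule ℝ (EuclideanSpace ℝ (Fin n))) (hdim : n + 1 ≤ m + finrank ℝ V) :
    ∃ v : EuclideanSpace ℝ (Fin n), v ∈ V ∧ dotProduct v v = 1 ∧
      ∃ c : Fin m → ℝ, (∑ j, c j ^ 2 = 1) ∧
        dotProduct v (A.mulVec v) = ∑ j, c j ^ 2 * hA.eigenvalues (g j) := by
  classical
  set b := hA.eigenvectorBasis with hb
  set f : Fin m → EuclideanSpace ℝ (Fin n) := fun j => b (g j) with hf
  have horth : Orthonormal ℝ f := b.orthonormal.comp g hg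
  have hlf : LinearIndependent ℝ f := horth.linearIndependent
  set W : Submodule ℝ (EuclideanSpace ℝ (Fin n)) := Submodule.span ℝ (Set.range f) with hW
  have hWrank : finrank ℝ W = m := by
    rw [hW, finrank_span_eq_card hlf, Fintype.card_fin]
  have hfr : finrank ℝ (EuclideanSpace ℝ (Fin n)) = n := finrank_euclideanSpace_fin
  have hsum := Submodule.finrank_sup_add_finrank_inf_eq V W
  have hle : finrank ℝ ↥(V ⊔ W) ≤ n := by
    simpa only [hfr] using Submodule.finrank_le (V ⊔ W)
  have hpos : 0 < finrank ℝ ↥(V ⊓ W) := by omega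
  have hnebot : (V ⊓ W) ≠ ⊥ := by
    intro h
    rw [h, finrank_bot] at hpos
    exact lt_irrefl 0 hpos
  obtain ⟨v₀, hv₀, hv₀0⟩ := Submodule.exists_mem_ne_zero_of_ne_bot hnebot
  have hnorm : ‖v₀‖ ≠ 0 := norm_ne_zero_iff.mpr hv₀0
  set v : EuclideanSpace ℝ (Fin n) := ‖v₀‖⁻¹ • v₀ with hv
  have hvV : v ∈ V := Submodule.smul_mem _ _ hv₀.1
  have hvW : v ∈ W := Submodule.smul_mem _ _ hv₀.2
  have hvn : ‖v‖ = 1 := by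
    rw [hv, norm_smul, norm_inv, norm_norm, inv_mul_cancel₀ hnorm]
  have hvv : dotProduct v v = 1 := by
    rw [← inner_eq_dot, real_inner_self_eq_norm_sq, hvn, one_pow]
  obtain ⟨c, hc⟩ := (Submodule.mem_span_range_iff_exists_fun ℝ).mp hvW
  refine ⟨v, hvV, hvv, c, ?_, ?_⟩
  · have := hvv
    rw [← hc, ← inner_eq_dot, horth.inner_sum c c Finset.univ] at this
    simpa [pow_two] using this
  · have hAv : A.mulVec v = ∑ j, (c j * hA.eigenvalues (g j)) • f j := by
      have h1 : A.mulVecLin v = ∑ j, c j • A.mulVecLin (f j) := by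
        rw [← hc, WithLp.ofLp_sum, map_sum]
        simp only [WithLp.ofLp_smul, _root_.map_smul]
      have h2 : ∀ j, A.mulVec (f j) = hA.eigenvalues (g j) • ⇑(b (g j)) :=
        fun j => hA.mulVec_eigenvectorBasis (g j)
      rw [show A.mulVec v = A.mulVecLin v from rfl, h1, WithLp.ofLp_sum]
      refine Finset.sum_congr rfl fun j _ => ?_
      rw [show A.mulVecLin (f j) = A.mulVec (f j) from rfl, h2 j, smul_smul]
      rfl
    rw [← inner_eq_dot]
    nth_rewrite 1 [← hc]
    rw [hAv, horth.inner_sum c (fun j => c j * hA.eigenvalues (g j)) Finset.univ]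
    refine Finset.sum_congr rfl fun j _ => ?_
    simp [pow_two]
    ring

private lemma exists_rayleigh_le_kthEig {n : ℕ} {A : Matrix (Fin n) (Fin n) ℝ}
    (hA : A.IsHermitian) {k : ℕ} (hk0 : 0 < k) (hkn : k ≤ n)
    (V : Submodule ℝ (EuclideanSpace ℝ (Fin n))) (hV : k ≤ finrank ℝ V) :
    ∃ v : EuclideanSpace ℝ (Fin n), v ∈ V ∧ dotProduct v v = 1 ∧
      dotProduct v (A.mulVec v) ≤ kthEig A k := by
  have hkth : kthEig A k = hA.eigenvalues (Tuple.sort hA.eigenvalues ⟨n - k, by omega⟩) := by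
    rw [kthEig, dif_pos ⟨hA, hk0, hkn⟩]
  set σ := Tuple.sort hA.eigenvalues with hσ
  have hmono : Monotone (hA.eigenvalues ∘ σ) := Tuple.monotone_sort hA.eigenvalues
  have hmn : n - k + 1 ≤ n := by omega
  set g : Fin (n - k + 1) → Fin n := fun j => σ (Fin.castLE hmn j) with hg
  have hginj : Function.Injective g :=
    σ.injective.comp (Fin.castLE_injective hmn)
  obtain ⟨v, hvV, hvv, c, hcsum, hcval⟩ := rayleigh_core hA g hginj V (by omega)
  refine ⟨v, hvV, hvv, ?_⟩
  rw [hcval, hkth]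
  calc ∑ j, c j ^ 2 * hA.eigenvalues (g j)
      ≤ ∑ j : Fin (n - k + 1), c j ^ 2 * hA.eigenvalues (σ ⟨n - k, by omega⟩) := by
        refine Finset.sum_le_sum fun j _ => ?_
        refine mul_le_mul_of_nonneg_left ?_ (sq_nonneg _)
        exact hmono (show (Fin.castLE hmn j : Fin n) ≤ ⟨n - k, by omega⟩ from by
          simp [Fin.le_def]
          omega)
    _ = hA.eigenvalues (σ ⟨n - k, by omega⟩) := by
        rw [← Finset.sum_mul, hcsum, one_mul]

private lemma exists_kthEig_le_rayleigh {n : ℕ} {A : Matrix (Fin n) (Fin n) ℝ}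
    (hA : A.IsHermitian) {k : ℕ} (hk0 : 0 < k) (hkn : k ≤ n)
    (W : Submodule ℝ (EuclideanSpace ℝ (Fin n))) (hW : n - k + 1 ≤ finrank ℝ W) :
    ∃ w : EuclideanSpace ℝ (Fin n), w ∈ W ∧ dotProduct w w = 1 ∧
      kthEig A k ≤ dotProduct w (A.mulVec w) := by
  have hkth : kthEig A k = hA.eigenvalues (Tuple.sort hA.eigenvalues ⟨n - k, by omega⟩) := by
    rw [kthEig, dif_pos ⟨hA, hk0, hkn⟩]
  set σ := Tuple.sort hA.eigenvalues with hσ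
  have hmono : Monotone (hA.eigenvalues ∘ σ) := Tuple.monotone_sort hA.eigenvalues
  set g : Fin k → Fin n := fun j => σ ⟨n - k + j.1,
    lt_of_lt_of_le (Nat.add_lt_add_left j.2 _) (le_of_eq (Nat.sub_add_cancel hkn))⟩ with hg
  have hginj : Function.Injective g := by
    intro a b hab
    have := σ.injective hab
    have := congrArg Fin.val this
    simp only at this
    exact Fin.ext (by omega)
  obtain ⟨w, hwW, hww, c, hcsum, hcval⟩ := rayleigh_core hA g hginj W (by omega)
  refine ⟨w, hwW, hww, ?_⟩
  rw [hcval, hkth]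
  calc hA.eigenvalues (σ ⟨n - k, by omega⟩)
      = ∑ j : Fin k, c j ^ 2 * hA.eigenvalues (σ ⟨n - k, by omega⟩) := by
        rw [← Finset.sum_mul, hcsum, one_mul]
    _ ≤ ∑ j, c j ^ 2 * hA.eigenvalues (g j) := by
        refine Finset.sum_le_sum fun j _ => ?_
        refine mul_le_mul_of_nonneg_left ?_ (sq_nonneg _)
        exact hmono (show (⟨n - k, by omega⟩ : Fin n) ≤ _ from by
          simp [Fin.le_def])

/-- The stability measure `π(S) = σ_{|S|}(P_{col(X_S)} P_avg P_{col(X_S)})` is antitone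
under set inclusion: if `S₁ ⊆ S₂` and the columns `X_{S₂}` are linearly independent, then
`π(S₁) ≥ π(S₂)`, for any PSD matrix `P_avg` with eigenvalues in `[0,1]`. -/
theorem stmt4 {n p : ℕ} (X : Matrix (Fin n) (Fin p) ℝ)
    (Pavg : Matrix (Fin n) (Fin n) ℝ)
    (hpsd : Pavg.PosSemidef) (hle : (1 - Pavg).PosSemidef)
    (S₁ S₂ : Finset (Fin p)) (hS : S₁ ⊆ S₂) (hne : S₁.Nonempty)
    (hlin : LinearIndependent ℝ (fun j : S₂ => (fun i => X i j.1)))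
    (Q₁ Q₂ : Matrix (Fin n) (Fin n) ℝ)
    (hQ₁h : Q₁.IsHermitian) (hQ₁i : Q₁ * Q₁ = Q₁)
    (hr₁ : LinearMap.range Q₁.mulVecLin
        = Submodule.span ℝ ((fun j => fun i => X i j) '' (S₁ : Set (Fin p))))
    (hQ₂h : Q₂.IsHermitian) (hQ₂i : Q₂ * Q₂ = Q₂)
    (hr₂ : LinearMap.range Q₂.mulVecLin
        = Submodule.span ℝ ((fun j => fun i => X i j) '' (S₂ : Set (Fin p)))) :
    kthEig (Q₂ * Pavg * Q₂) S₂.card ≤ kthEig (Q₁ * Pavg * Q₁) S₁.card := by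
  classical
  have hP := hpsd.1
  -- transposes
  have hQ₁t : Q₁ᵀ = Q₁ := by
    ext i j
    have := congrFun (congrFun hQ₁h i) j
    simpa using this
  have hQ₂t : Q₂ᵀ = Q₂ := by
    ext i j
    have := congrFun (congrFun hQ₂h i) j
    simpa using this
  -- hermitian products
  have hA₁ : (Q₁ * Pavg * Q₁).IsHermitian := by
    show (Q₁ * Pavg * Q₁)ᴴ = _
    rw [conjTranspose_mul, conjTranspose_mul, hQ₁h, hP, Matrix.mul_assoc]
  have hA₂ : (Q₂ * Pavg * Q₂).IsHermitian := by
    show (Q₂ * Pavg * Q₂)ᴴ = _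
    rw [conjTranspose_mul, conjTranspose_mul, hQ₂h, hP, Matrix.mul_assoc]
  -- linear independence of subfamily
  have hincl : ∀ x : {x // x ∈ S₁}, (⟨x.1, hS x.2⟩ : {x // x ∈ S₂}) = ⟨x.1, hS x.2⟩ := fun _ => rfl
  have hlin₁ : LinearIndependent ℝ (fun j : S₁ => (fun i => X i j.1)) := by
    refine hlin.comp (fun x : {x // x ∈ S₁} => (⟨x.1, hS x.2⟩ : {x // x ∈ S₂})) ?_
    intro a b hab
    exact Subtype.ext (by simpa using congrArg Subtype.val hab)
  -- finranks of the ranges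
  have himg₁ : ((fun j => fun i => X i j) '' (S₁ : Set (Fin p)))
      = Set.range (fun j : S₁ => (fun i => X i j.1)) := by
    exact Set.image_eq_range _ _
  have himg₂ : ((fun j => fun i => X i j) '' (S₂ : Set (Fin p)))
      = Set.range (fun j : S₂ => (fun i => X i j.1)) := by
    exact Set.image_eq_range _ _
  have hfr₁ : finrank ℝ (LinearMap.range Q₁.mulVecLin) = S₁.card := by
    rw [hr₁, himg₁, finrank_span_eq_card hlin₁, Fintype.card_coe]
  have hfr₂ : finrank ℝ (LinearMap.range Q₂.mulVecLin) = S₂.card := by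
    rw [hr₂, himg₂, finrank_span_eq_card hlin, Fintype.card_coe]
  have hk1 : 0 < S₁.card := Finset.card_pos.mpr hne
  have hk12 : S₁.card ≤ S₂.card := Finset.card_le_card hS
  -- the ranges as submodules of Euclidean space
  set K₁ : Submodule ℝ (EuclideanSpace ℝ (Fin n)) := (LinearMap.range Q₁.mulVecLin).comap (WithLp.linearEquiv 2 ℝ (Fin n → ℝ)).toLinearMap with hK₁
  set K₂ : Submodule ℝ (EuclideanSpace ℝ (Fin n)) := (LinearMap.range Q₂.mulVecLin).comap (WithLp.linearEquiv 2 ℝ (Fin n → ℝ)).toLinearMap with hK₂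
  have hK₁r : finrank ℝ K₁ = S₁.card := by
    rw [hK₁, Submodule.comap_equiv_eq_map_symm, LinearEquiv.finrank_map_eq]; exact hfr₁
  have hK₂r : finrank ℝ K₂ = S₂.card := by
    rw [hK₂, Submodule.comap_equiv_eq_map_symm, LinearEquiv.finrank_map_eq]; exact hfr₂
  have hk2n : S₂.card ≤ n := by
    rw [← hK₂r]
    simpa only [finrank_euclideanSpace_fin] using Submodule.finrank_le K₂
  -- projections fix their ranges
  have hfix₁ : ∀ v : Fin n → ℝ, v ∈ LinearMap.range Q₁.mulVecLin → Q₁ *ᵥ v = v := by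
    rintro v ⟨u, rfl⟩
    show Q₁ *ᵥ (Q₁ *ᵥ u) = _
    rw [mulVec_mulVec, hQ₁i]
    rfl
  have hfix₂ : ∀ v : Fin n → ℝ, v ∈ LinearMap.range Q₂.mulVecLin → Q₂ *ᵥ v = v := by
    rintro v ⟨u, rfl⟩
    show Q₂ *ᵥ (Q₂ *ᵥ u) = _
    rw [mulVec_mulVec, hQ₂i]
    rfl
  -- step 1: get v in K₁
  obtain ⟨v, hvK₁, hvv, hvray⟩ := exists_rayleigh_le_kthEig hA₁ hk1 (le_trans hk12 hk2n)
    K₁ (le_of_eq hK₁r.symm)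
  have hvfix₁ : Q₁ *ᵥ v = v := hfix₁ v hvK₁
  have hvK₂ : v ∈ K₂ := by
    rw [hK₂, Submodule.mem_comap, hr₂]
    have h1 : (WithLp.linearEquiv 2 ℝ (Fin n → ℝ)).toLinearMap v ∈ Submodule.span ℝ ((fun j => fun i => X i j) '' (S₁ : Set (Fin p))) := by
      rw [← hr₁]; exact hvK₁
    exact Submodule.span_mono (Set.image_mono (Finset.coe_subset.mpr hS)) h1
  have hvfix₂ : Q₂ *ᵥ v = v := hfix₂ v hvK₂
  -- rayleigh of v for A₁ equals rayleigh for Pavg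
  have hdotQ : ∀ (Q : Matrix (Fin n) (Fin n) ℝ), Qᵀ = Q → ∀ x y : Fin n → ℝ,
      dotProduct x (Q *ᵥ y) = dotProduct (Q *ᵥ x) y := by
    intro Q hQt x y
    rw [Matrix.dotProduct_mulVec, ← Matrix.mulVec_transpose, hQt]
  have hvP : dotProduct v ((Q₁ * Pavg * Q₁) *ᵥ v) = dotProduct v (Pavg *ᵥ v) := by
    rw [← mulVec_mulVec, ← mulVec_mulVec, hvfix₁, hdotQ Q₁ hQ₁t, hvfix₁]
  have hvP0 : 0 ≤ dotProduct v (Pavg *ᵥ v) := by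
    have := hpsd.dotProduct_mulVec_nonneg v
    simpa using this
  -- step 2: W := K₂ᗮ ⊔ span v
  have hv0 : v ≠ 0 := by
    intro h
    rw [h] at hvv
    simp [dotProduct] at hvv
  have hvnotin : v ∉ K₂ᗮ := by
    intro h
    have := (Submodule.mem_orthogonal K₂ v).mp h v hvK₂
    rw [inner_eq_dot, hvv] at this
    norm_num at this
  have hinfbot : K₂ᗮ ⊓ (ℝ ∙ v) = ⊥ := by
    rw [Submodule.eq_bot_iff]
    rintro x ⟨hx1, hx2⟩
    obtain ⟨t, rfl⟩ := Submodule.mem_span_singleton.mp hx2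
    rcases eq_or_ne t 0 with h | h
    · rw [h, zero_smul]
    · exfalso
      exact hvnotin (by
        have := Submodule.smul_mem K₂ᗮ t⁻¹ hx1
        rwa [smul_smul, inv_mul_cancel₀ h, one_smul] at this)
  have hKor : finrank ℝ K₂ᗮ = n - S₂.card := by
    have := Submodule.finrank_add_finrank_orthogonal K₂
    rw [hK₂r, finrank_euclideanSpace_fin] at this
    omega
  have hWr : finrank ℝ ↥(K₂ᗮ ⊔ (ℝ ∙ v)) = n - S₂.card + 1 := by
    have := Submodule.finrank_sup_add_finrank_inf_eq K₂ᗮ (ℝ ∙ v)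
    rw [hinfbot, finrank_bot, finrank_span_singleton hv0, hKor] at this
    omega
  obtain ⟨w, hwW, hww, hwray⟩ := exists_kthEig_le_rayleigh hA₂ (lt_of_lt_of_le hk1 hk12) hk2n
    (K₂ᗮ ⊔ (ℝ ∙ v)) (le_of_eq hWr.symm)
  -- decompose w
  obtain ⟨u, hu, z, hz, hwuz⟩ := Submodule.mem_sup.mp hwW
  obtain ⟨t, rfl⟩ := Submodule.mem_span_singleton.mp hz
  -- Q₂ kills K₂ᗮ
  have hQ₂u : Q₂ *ᵥ u = 0 := by
    have hyK : WithLp.toLp 2 (Q₂ *ᵥ u) ∈ K₂ := ⟨u, rfl⟩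
    have hy0 : dotProduct (Q₂ *ᵥ u) u = 0 := by
      have := (Submodule.mem_orthogonal K₂ u).mp hu _ hyK
      simpa only [inner_eq_dot, WithLp.ofLp_toLp] using this
    have : dotProduct (Q₂ *ᵥ u) (Q₂ *ᵥ u) = 0 := by
      rw [hdotQ Q₂ hQ₂t, mulVec_mulVec, hQ₂i, hy0]
    exact (dotProduct_self_eq_zero).mp this
  have hQ₂w : Q₂ *ᵥ w = t • v := by
    rw [← hwuz, WithLp.ofLp_add, WithLp.ofLp_smul, mulVec_add, hQ₂u, zero_add, mulVec_smul, hvfix₂]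
  -- rayleigh of w
  have hwP : dotProduct w ((Q₂ * Pavg * Q₂) *ᵥ w)
      = t ^ 2 * dotProduct v (Pavg *ᵥ v) := by
    rw [← mulVec_mulVec, ← mulVec_mulVec, hdotQ Q₂ hQ₂t, hQ₂w,
      smul_dotProduct, mulVec_smul, dotProduct_smul]
    simp only [smul_eq_mul, smul_smul]
    ring
  -- t² ≤ 1
  have huv : dotProduct u v = 0 := by
    have := (Submodule.mem_orthogonal K₂ u).mp hu v hvK₂
    rw [inner_eq_dot] at this
    rw [dotProduct_comm]
    exact this
  have huu : 0 ≤ dotProduct u u := by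
    apply Finset.sum_nonneg
    intro i _
    exact mul_self_nonneg _
  have ht1 : t ^ 2 ≤ 1 := by
    have hexp : dotProduct w w = dotProduct u u + t ^ 2 := by
      rw [← hwuz, WithLp.ofLp_add, WithLp.ofLp_smul]
      rw [add_dotProduct, dotProduct_add, dotProduct_add, dotProduct_smul, smul_dotProduct,
        smul_dotProduct, dotProduct_smul, huv, hvv, dotProduct_comm v u, huv]
      simp only [smul_eq_mul, mul_zero, mul_one, add_zero, zero_add]
      ring
    rw [hww] at hexp
    nlinarith
  -- combine
  calc kthEig (Q₂ * Pavg * Q₂) S₂.card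
      ≤ dotProduct w ((Q₂ * Pavg * Q₂) *ᵥ w) := hwray
    _ = t ^ 2 * dotProduct v (Pavg *ᵥ v) := hwP
    _ ≤ 1 * dotProduct v (Pavg *ᵥ v) := mul_le_mul_of_nonneg_right ht1 hvP0
    _ = dotProduct v ((Q₁ * Pavg * Q₁) *ᵥ v) := by rw [one_mul, hvP]
    _ ≤ kthEig (Q₁ * Pavg * Q₁) S₁.card := hvray
end

section
/- Let A = Σ_{i=1}^k X_i X_i^T where X_1,…,X_k ∈ R^n are unit vectors with n > k and pairwise inner products bounded: |X_i^T X_j| ≤ η₀ for all i ≠ j. If η₀ < 1/(k³(k−1)), then the k-th largest eigenvalue of A satisfies λ_k(A) ≥ (1 + √(1 − 4k(k−1)η₀))/2, and λ_j(A) = 0 for all j > k. -/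
open Matrix

section AuxLemmas

variable {n k : ℕ}

private lemma aux_dot_sum (v : Fin n → ℝ) (w : Fin k → Fin n → ℝ) :
    v ⬝ᵥ (∑ l, w l) = ∑ l, v ⬝ᵥ w l := by
  simp [dotProduct, Finset.sum_apply, Finset.mul_sum]
  exact Finset.sum_comm

private lemma aux_sum_dot (v : Fin n → ℝ) (w : Fin k → Fin n → ℝ) :
    (∑ l, w l) ⬝ᵥ v = ∑ l, w l ⬝ᵥ v := by
  simp [dotProduct, Finset.sum_apply, Finset.sum_mul]
  exact Finset.sum_comm

private lemma aux_herm (X : Fin k → (Fin n → ℝ)) :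
    (∑ i, vecMulVec (X i) (X i)).IsHermitian := by
  unfold Matrix.IsHermitian
  ext i j
  simp [conjTranspose_apply, Matrix.sum_apply, vecMulVec_apply, mul_comm]

private lemma aux_mulVec (X : Fin k → (Fin n → ℝ)) (w : Fin n → ℝ) :
    (∑ i, vecMulVec (X i) (X i)) *ᵥ w = ∑ l, (X l ⬝ᵥ w) • X l := by
  ext j
  simp only [mulVec, dotProduct, Matrix.sum_apply, vecMulVec_apply, Finset.sum_apply,
    Pi.smul_apply, smul_eq_mul, Finset.sum_mul]
  rw [Finset.sum_comm]
  refine Finset.sum_congr rfl fun l _ => Finset.sum_congr rfl fun m _ => ?_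
  ring

private lemma aux_trace (X : Fin k → (Fin n → ℝ)) (hunit : ∀ i, X i ⬝ᵥ X i = 1) :
    (∑ i, vecMulVec (X i) (X i)).trace = k := by
  rw [trace_sum]
  have : ∀ i, (vecMulVec (X i) (X i)).trace = 1 := by
    intro i
    have := hunit i
    simpa [Matrix.trace, Matrix.diag, vecMulVec_apply, dotProduct] using this
  simp [this]

private lemma aux_trace_eig {A : Matrix (Fin n) (Fin n) ℝ} (hA : A.IsHermitian) :
    A.trace = ∑ i, hA.eigenvalues i := by
  simpa using hA.trace_eq_sum_eigenvalues

private lemma aux_vv {A : Matrix (Fin n) (Fin n) ℝ} (hA : A.IsHermitian) (i : Fin n) :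
    (⇑(hA.eigenvectorBasis i) : Fin n → ℝ) ⬝ᵥ ⇑(hA.eigenvectorBasis i) = 1 := by
  have h1 : (inner ℝ (hA.eigenvectorBasis i) (hA.eigenvectorBasis i) : ℝ) = 1 := by
    rw [real_inner_self_eq_norm_sq, hA.eigenvectorBasis.orthonormal.1 i]
    norm_num
  simp only [PiLp.inner_apply, RCLike.inner_apply, conj_trivial] at h1
  simpa [dotProduct, mul_comm] using h1

private lemma aux_eig_eq {A : Matrix (Fin n) (Fin n) ℝ} (hA : A.IsHermitian) (i : Fin n) :
    hA.eigenvalues i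
      = (⇑(hA.eigenvectorBasis i) : Fin n → ℝ) ⬝ᵥ (A *ᵥ ⇑(hA.eigenvectorBasis i)) := by
  simpa using hA.eigenvalues_eq i

private lemma aux_key (X : Fin k → (Fin n → ℝ)) (hunit : ∀ i, X i ⬝ᵥ X i = 1)
    (η : ℝ) (hη0 : 0 ≤ η)
    (hcorr : ∀ i j, i ≠ j → |X i ⬝ᵥ X j| ≤ η)
    (hA : (∑ i, vecMulVec (X i) (X i)).IsHermitian) (i : Fin n) :
    0 ≤ hA.eigenvalues i ∧
      |hA.eigenvalues i ^ 2 - hA.eigenvalues i|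
        ≤ ((k:ℝ) - 1) * η * hA.eigenvalues i := by
  set v : Fin n → ℝ := ⇑(hA.eigenvectorBasis i) with hv
  set a : Fin k → ℝ := fun l => X l ⬝ᵥ v with ha
  set μ := hA.eigenvalues i with hμdef
  have hAv : (∑ i, vecMulVec (X i) (X i)) *ᵥ v = ∑ l, a l • X l := aux_mulVec X v
  have hmu : μ = ∑ l, a l * a l := by
    rw [hμdef, aux_eig_eq hA i, ← hv, hAv, aux_dot_sum]
    refine Finset.sum_congr rfl fun l _ => ?_
    rw [dotProduct_smul, smul_eq_mul, dotProduct_comm]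
  have hmu_nonneg : 0 ≤ μ := by
    rw [hmu]; exact Finset.sum_nonneg fun l _ => mul_self_nonneg _
  refine ⟨hmu_nonneg, ?_⟩
  have hmu2 : μ ^ 2 = ∑ l, ∑ m, a l * a m * (X l ⬝ᵥ X m) := by
    have h1 : (∑ i, vecMulVec (X i) (X i)) *ᵥ v = μ • v := hA.mulVec_eigenvectorBasis i
    have h2 : (μ • v) ⬝ᵥ (μ • v) = μ ^ 2 := by
      rw [smul_dotProduct, dotProduct_smul, aux_vv hA i]
      simp [pow_two]
    rw [← h2, ← h1, hAv, aux_sum_dot]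
    refine Finset.sum_congr rfl fun l _ => ?_
    rw [smul_dotProduct, smul_eq_mul, aux_dot_sum, Finset.mul_sum]
    refine Finset.sum_congr rfl fun m _ => ?_
    rw [dotProduct_smul, smul_eq_mul]
    ring
  have hdiff : μ ^ 2 - μ = ∑ l, ∑ m ∈ Finset.univ.erase l, a l * a m * (X l ⬝ᵥ X m) := by
    rw [hmu2, hmu, ← Finset.sum_sub_distrib]
    refine Finset.sum_congr rfl fun l _ => ?_
    rw [Finset.sum_erase_eq_sub (Finset.mem_univ l), hunit l]
    ring_nf
  rw [hdiff]
  calc |∑ l, ∑ m ∈ Finset.univ.erase l, a l * a m * (X l ⬝ᵥ X m)|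
      ≤ ∑ l, ∑ m ∈ Finset.univ.erase l, |a l| * |a m| * η := by
        refine (Finset.abs_sum_le_sum_abs _ _).trans (Finset.sum_le_sum fun l _ => ?_)
        refine (Finset.abs_sum_le_sum_abs _ _).trans (Finset.sum_le_sum fun m hm => ?_)
        rw [abs_mul, abs_mul]
        exact mul_le_mul_of_nonneg_left (hcorr l m (Finset.ne_of_mem_erase hm).symm)
          (by positivity)
    _ ≤ ((k:ℝ) - 1) * η * μ := by
        have hS : ∑ l, ∑ m ∈ Finset.univ.erase l, |a l| * |a m|
            ≤ ((k:ℝ) - 1) * μ := by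
          have e1 : ∑ l, ∑ m ∈ Finset.univ.erase l, |a l| * |a m|
              = (∑ l, |a l|) ^ 2 - ∑ l, a l * a l := by
            rw [pow_two, Finset.sum_mul_sum, ← Finset.sum_sub_distrib]
            refine Finset.sum_congr rfl fun l _ => ?_
            rw [Finset.sum_erase_eq_sub (Finset.mem_univ l), abs_mul_abs_self]
          have e2 : (∑ l, |a l|) ^ 2 ≤ (k:ℝ) * ∑ l, a l * a l := by
            have := sq_sum_le_card_mul_sum_sq (s := Finset.univ) (f := fun l => |a l|)
            simpa [pow_two, abs_mul_abs_self] using this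
          rw [e1, hmu]
          linarith
        calc ∑ l, ∑ m ∈ Finset.univ.erase l, |a l| * |a m| * η
            = (∑ l, ∑ m ∈ Finset.univ.erase l, |a l| * |a m|) * η := by
              rw [Finset.sum_mul]
              exact Finset.sum_congr rfl fun l _ => by rw [Finset.sum_mul]
          _ ≤ (((k:ℝ) - 1) * μ) * η := mul_le_mul_of_nonneg_right hS hη0
          _ = ((k:ℝ) - 1) * η * μ := by ring

end AuxLemmas

set_option maxHeartbeats 1600000 in
/-- Let `A = Σᵢ Xᵢ Xᵢᵀ` for unit vectors `X₁,…,X_k ∈ ℝⁿ` with `n > k` and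
`|Xᵢᵀ Xⱼ| ≤ η₀` for `i ≠ j`. If `η₀ < 1/(k³(k−1))` then
`λ_k(A) ≥ (1 + √(1 − 4k(k−1)η₀))/2` and `λ_j(A) = 0` for all `j > k`. -/
theorem stmt8 {n k : ℕ} (hk : 0 < k) (hnk : k < n) (η₀ : ℝ)
    (X : Fin k → (Fin n → ℝ)) (hunit : ∀ i, X i ⬝ᵥ X i = 1)
    (hcorr : ∀ i j, i ≠ j → |X i ⬝ᵥ X j| ≤ η₀)
    (hη : η₀ < 1 / ((k : ℝ) ^ 3 * ((k : ℝ) - 1))) :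
    (1 + Real.sqrt (1 - 4 * (k : ℝ) * ((k : ℝ) - 1) * η₀)) / 2
        ≤ kthEig (∑ i, vecMulVec (X i) (X i)) k ∧
      ∀ j, k < j → kthEig (∑ i, vecMulVec (X i) (X i)) j = 0 := by
  classical
  have hA : (∑ i, vecMulVec (X i) (X i)).IsHermitian := aux_herm X
  set μ : Fin n → ℝ := hA.eigenvalues with hμ
  set η : ℝ := max η₀ 0 with hηdef
  have hη0 : 0 ≤ η := le_max_right _ _
  set c : ℝ := ((k:ℝ) - 1) * η with hcdef
  have hkr : (1:ℝ) ≤ (k:ℝ) := by exact_mod_cast hk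
  have hc0 : 0 ≤ c := mul_nonneg (by linarith) hη0
  -- numeric facts
  have hfacts : ((k:ℝ) - 1) * c < 1 ∧ (k:ℝ) < ((k:ℝ) + 1) * (1 - c) ∧
      (1 + Real.sqrt (1 - 4 * (k:ℝ) * ((k:ℝ) - 1) * η₀)) / 2 ≤ 1 - c := by
    rcases eq_or_lt_of_le hkr with h1 | h2
    · -- k = 1
      have hc : c = 0 := by rw [hcdef, ← h1]; ring
      refine ⟨by rw [hc]; linarith, by rw [hc, ← h1]; norm_num, ?_⟩
      rw [hc, ← h1]
      norm_num
    · -- k ≥ 2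
      have hk2 : 2 ≤ k := by
        have : 1 < k := by exact_mod_cast h2
        omega
      have hk2r : (2:ℝ) ≤ (k:ℝ) := by exact_mod_cast hk2
      have hη₀0 : 0 ≤ η₀ := le_trans (abs_nonneg _)
        (hcorr ⟨0, by omega⟩ ⟨1, by omega⟩ (by simp [Fin.ext_iff]))
      have hηeq : η = η₀ := max_eq_left hη₀0
      have hP : (0:ℝ) < (k:ℝ) ^ 3 * ((k:ℝ) - 1) :=
        mul_pos (by positivity) (by linarith)
      have hkey : η₀ * ((k:ℝ) ^ 3 * ((k:ℝ) - 1)) < 1 := (lt_div_iff₀ hP).mp hη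
      have hceq : c = ((k:ℝ) - 1) * η₀ := by rw [hcdef, hηeq]
      have ht2 : (0:ℝ) ≤ (k:ℝ) - 2 := by linarith
      have hk10 : (0:ℝ) ≤ (k:ℝ) - 1 := by linarith
      have hcube : (k:ℝ) + 1 ≤ (k:ℝ) ^ 3 := by
        nlinarith [mul_nonneg ht2 (sq_nonneg (k:ℝ)),
          mul_nonneg ht2 (by linarith : (0:ℝ) ≤ (k:ℝ))]
      have hmm : ((k:ℝ) + 1) * ((k:ℝ) - 1) ≤ (k:ℝ) ^ 3 * ((k:ℝ) - 1) :=
        mul_le_mul_of_nonneg_right hcube hk10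
      refine ⟨?_, ?_, ?_⟩
      · have e1 : ((k:ℝ) - 1) * ((k:ℝ) - 1) * η₀ ≤ ((k:ℝ) ^ 3 * ((k:ℝ) - 1)) * η₀ :=
          mul_le_mul_of_nonneg_right (by nlinarith [hmm]) hη₀0
        rw [hceq]
        nlinarith [e1, hkey]
      · have e2 : (((k:ℝ) + 1) * ((k:ℝ) - 1)) * η₀ ≤ ((k:ℝ) ^ 3 * ((k:ℝ) - 1)) * η₀ :=
          mul_le_mul_of_nonneg_right hmm hη₀0
        rw [hceq]
        nlinarith [e2, hkey]
      · have h2c : 2 * c ≤ 1 := by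
          have e3 : (2 * ((k:ℝ) - 1)) * η₀ ≤ ((k:ℝ) ^ 3 * ((k:ℝ) - 1)) * η₀ :=
            mul_le_mul_of_nonneg_right (by nlinarith [hmm]) hη₀0
          rw [hceq]
          nlinarith [e3, hkey]
        have hs : 1 - 4 * (k:ℝ) * ((k:ℝ) - 1) * η₀ ≤ (1 - 2 * c) ^ 2 := by
          rw [hceq]; nlinarith [sq_nonneg (((k:ℝ) - 1) * η₀),
            mul_nonneg hη₀0 (by linarith : (0:ℝ) ≤ (k:ℝ) - 1)]
        have hsq : Real.sqrt (1 - 4 * (k:ℝ) * ((k:ℝ) - 1) * η₀) ≤ 1 - 2 * c := by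
          calc Real.sqrt (1 - 4 * (k:ℝ) * ((k:ℝ) - 1) * η₀)
              ≤ Real.sqrt ((1 - 2 * c) ^ 2) := Real.sqrt_le_sqrt hs
            _ = 1 - 2 * c := Real.sqrt_sq (by linarith)
        linarith
  have hkey : ∀ i, 0 ≤ μ i ∧ |μ i ^ 2 - μ i| ≤ c * μ i := fun i =>
    aux_key X hunit η hη0 (fun i j hij => le_trans (hcorr i j hij) (le_max_left _ _)) hA i
  have band : ∀ i, μ i = 0 ∨ (1 - c ≤ μ i ∧ μ i ≤ 1 + c) := by
    intro i
    obtain ⟨h0, hb⟩ := hkey i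
    rcases h0.eq_or_lt with h | h
    · exact Or.inl h.symm
    · right
      have hx : μ i ^ 2 - μ i = (μ i - 1) * μ i := by ring
      rw [hx, abs_mul, abs_of_pos h] at hb
      have h1 : |μ i - 1| ≤ c := (mul_le_mul_iff_of_pos_right h).mp hb
      have := abs_le.mp h1
      constructor <;> linarith [this.1, this.2]
  have htr : ∑ i, μ i = (k:ℝ) := (aux_trace_eig hA).symm.trans (aux_trace X hunit)
  have hmono : Monotone (μ ∘ Tuple.sort μ) := Tuple.monotone_sort μ
  have hsum : ∑ i, μ (Tuple.sort μ i) = (k:ℝ) :=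
    (Equiv.sum_comp (Tuple.sort μ) μ).trans htr
  -- claim A
  have claimA : 1 - c ≤ μ (Tuple.sort μ (⟨n - k, by omega⟩ : Fin n)) := by
    by_contra hcon
    push_neg at hcon
    set i0 : Fin n := ⟨n - k, by omega⟩ with hi0
    have h0 : μ (Tuple.sort μ i0) = 0 := by
      rcases band (Tuple.sort μ i0) with h | h
      · exact h
      · exact absurd h.1 (by linarith [hcon])
    have hzero : ∀ i : Fin n, i ≤ i0 → μ (Tuple.sort μ i) = 0 := fun i hi =>
      le_antisymm (le_of_le_of_eq (hmono hi) h0) (hkey _).1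
    have hsub : ∑ i, μ (Tuple.sort μ i) = ∑ i ∈ Finset.Ioi i0, μ (Tuple.sort μ i) := by
      symm
      apply Finset.sum_subset (Finset.subset_univ _)
      intro x _ hx
      exact hzero x (le_of_not_gt (by simpa [Finset.mem_Ioi] using hx))
    have hcard : (Finset.Ioi i0).card = k - 1 := by
      have hval : (i0 : ℕ) = n - k := rfl
      rw [Fin.card_Ioi, hval]
      omega
    have hle : ∑ i ∈ Finset.Ioi i0, μ (Tuple.sort μ i) ≤ ((k:ℝ) - 1) * (1 + c) := by
      calc ∑ i ∈ Finset.Ioi i0, μ (Tuple.sort μ i)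
          ≤ ∑ _i ∈ Finset.Ioi i0, (1 + c) :=
            Finset.sum_le_sum fun i _ =>
              (band _).elim (fun h => by rw [h]; linarith) (fun h => h.2)
        _ = ((Finset.Ioi i0).card : ℝ) * (1 + c) := by
            rw [Finset.sum_const, nsmul_eq_mul]
        _ = ((k:ℝ) - 1) * (1 + c) := by
            rw [hcard, Nat.cast_sub hk, Nat.cast_one]
    have hexp : ((k:ℝ) - 1) * (1 + c) = ((k:ℝ) - 1) + ((k:ℝ) - 1) * c := by ring
    have hkk : (k:ℝ) ≤ ((k:ℝ) - 1) * (1 + c) :=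
      calc (k:ℝ) = ∑ i, μ (Tuple.sort μ i) := hsum.symm
        _ = ∑ i ∈ Finset.Ioi i0, μ (Tuple.sort μ i) := hsub
        _ ≤ ((k:ℝ) - 1) * (1 + c) := hle
    linarith [hfacts.1]
  -- claim B
  have claimB : ∀ j (hj : k < j) (hjn : j ≤ n),
      μ (Tuple.sort μ (⟨n - j, by omega⟩ : Fin n)) = 0 := by
    intro j hj hjn
    by_contra hcon
    set i0 : Fin n := ⟨n - j, by omega⟩ with hi0
    have h1 : 1 - c ≤ μ (Tuple.sort μ i0) :=
      (band _).elim (fun h => absurd h hcon) (fun h => h.1)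
    have hcard : (Finset.Ici i0).card = j := by
      have hval : (i0 : ℕ) = n - j := rfl
      rw [Fin.card_Ici, hval]
      omega
    have hchain : ((j:ℝ)) * (1 - c) ≤ (k:ℝ) := by
      calc ((j:ℝ)) * (1 - c) = ((Finset.Ici i0).card : ℝ) * (1 - c) := by rw [hcard]
        _ = ∑ _i ∈ Finset.Ici i0, (1 - c) := by rw [Finset.sum_const, nsmul_eq_mul]
        _ ≤ ∑ i ∈ Finset.Ici i0, μ (Tuple.sort μ i) :=
            Finset.sum_le_sum fun i hi => h1.trans (hmono (Finset.mem_Ici.mp hi))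
        _ ≤ ∑ i, μ (Tuple.sort μ i) :=
            Finset.sum_le_sum_of_subset_of_nonneg (Finset.subset_univ _)
              (fun i _ _ => (hkey _).1)
        _ = (k:ℝ) := hsum
    have h1c : 0 < 1 - c := by nlinarith [hfacts.2.1]
    have hj1 : (k:ℝ) + 1 ≤ (j:ℝ) := by exact_mod_cast hj
    nlinarith [hfacts.2.1, mul_le_mul_of_nonneg_right hj1 h1c.le]
  constructor
  · rw [kthEig, dif_pos (show (∑ i, vecMulVec (X i) (X i)).IsHermitian ∧ 0 < k ∧ k ≤ n
        from ⟨hA, hk, hnk.le⟩)]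
    exact le_trans hfacts.2.2 claimA
  · intro j hj
    by_cases hjn : j ≤ n
    · rw [kthEig, dif_pos (show (∑ i, vecMulVec (X i) (X i)).IsHermitian ∧ 0 < j ∧ j ≤ n
          from ⟨hA, by omega, hjn⟩)]
      exact claimB j hj hjn
    · rw [kthEig, dif_neg (by tauto)]
end

section
/- Let x_k be a unit vector and x_j = x_k + δ_j with ‖δ_j‖ = η₁ > 0 and |x_k^T δ_j| ≤ η₀ η₁ where η₀² < 1. Then the squared norm of the component of x_k orthogonal to x_j satisfies ‖x_k − P_{span(x_j)} x_k‖² ≥ η₁²(1 − η₀²) / (1 + η₁² + 2η₁η₀). -/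
open Matrix

/-- The orthogonal projection matrix onto the span of a vector `v` (`0` if `v = 0`). -/
noncomputable def projVec {n : ℕ} (v : Fin n → ℝ) : Matrix (Fin n) (Fin n) ℝ :=
  (v ⬝ᵥ v)⁻¹ • Matrix.vecMulVec v v

/-- Let `x_k` be a unit vector and `x_j = x_k + δ` with `‖δ‖ = η₁ > 0`,
`|x_kᵀ δ| ≤ η₀ η₁`, `0 ≤ η₀` and `η₀² < 1`. Then
`‖x_k − P_{span x_j} x_k‖² ≥ η₁²(1 − η₀²)/(1 + η₁² + 2η₁η₀)`. -/
theorem stmt11 {n : ℕ} (xk δ : Fin n → ℝ) (η₀ η₁ : ℝ)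
    (hxk : xk ⬝ᵥ xk = 1) (hδ : δ ⬝ᵥ δ = η₁ ^ 2) (hη₁ : 0 < η₁)
    (hcorr : |xk ⬝ᵥ δ| ≤ η₀ * η₁) (hη₀ : 0 ≤ η₀) (hη₀lt : η₀ ^ 2 < 1) :
    η₁ ^ 2 * (1 - η₀ ^ 2) / (1 + η₁ ^ 2 + 2 * η₁ * η₀)
      ≤ (xk - projVec (xk + δ) *ᵥ xk) ⬝ᵥ (xk - projVec (xk + δ) *ᵥ xk) := by
  set v : Fin n → ℝ := xk + δ with hv
  set c : ℝ := xk ⬝ᵥ δ with hc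
  have hcd : δ ⬝ᵥ xk = c := dotProduct_comm δ xk
  have hs : v ⬝ᵥ v = 1 + 2 * c + η₁ ^ 2 := by
    simp only [hv, dotProduct_add, add_dotProduct, hxk, hδ, hcd, ← hc]
    ring
  have ht : v ⬝ᵥ xk = 1 + c := by
    simp only [hv, add_dotProduct, hxk, hcd]
  have hcub : c ≤ η₀ * η₁ := (abs_le.mp hcorr).2
  have hclb : -(η₀ * η₁) ≤ c := (abs_le.mp hcorr).1
  have hcle : c ^ 2 ≤ η₀ ^ 2 * η₁ ^ 2 := by
    nlinarith [abs_nonneg c, sq_abs c]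
  have hspos : (0:ℝ) < v ⬝ᵥ v := by
    rw [hs]
    nlinarith [sq_nonneg (1 - η₁), mul_pos hη₁ (by nlinarith : (0:ℝ) < 1 - η₀)]
  have hvv : Matrix.vecMulVec v v *ᵥ xk = (v ⬝ᵥ xk) • v := by
    funext i
    simp only [Matrix.mulVec, Matrix.vecMulVec_apply, dotProduct, Pi.smul_apply, smul_eq_mul,
      Finset.sum_mul]
    exact Finset.sum_congr rfl fun x _ => by ring
  have hproj : projVec v *ᵥ xk = ((v ⬝ᵥ v)⁻¹ * (v ⬝ᵥ xk)) • v := by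
    rw [projVec, Matrix.smul_mulVec, hvv, smul_smul]
  have key : (xk - projVec v *ᵥ xk) ⬝ᵥ (xk - projVec v *ᵥ xk)
      = 1 - (v ⬝ᵥ xk) ^ 2 / (v ⬝ᵥ v) := by
    rw [hproj]
    have hxv : xk ⬝ᵥ v = v ⬝ᵥ xk := dotProduct_comm xk v
    rw [dotProduct_sub, sub_dotProduct, sub_dotProduct, dotProduct_smul, smul_dotProduct,
      smul_dotProduct, dotProduct_smul, hxk, hxv]
    have hne := hspos.ne'
    generalize v ⬝ᵥ v = s at hne ⊢
    generalize v ⬝ᵥ xk = t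
    field_simp
    linear_combination t ^ 2 * (s * s⁻¹ - 1) * mul_inv_cancel₀ hne
  have hs' : (0:ℝ) < 1 + 2 * c + η₁ ^ 2 := hs ▸ hspos
  rw [key, ht, hs]
  have heq : 1 - (1 + c) ^ 2 / (1 + 2 * c + η₁ ^ 2)
      = (η₁ ^ 2 - c ^ 2) / (1 + 2 * c + η₁ ^ 2) := by
    rw [eq_div_iff hs'.ne', sub_mul, div_mul_cancel₀ _ hs'.ne']
    ring
  rw [heq]
  exact div_le_div₀ (by nlinarith) (by nlinarith) hs' (by nlinarith)
end

section
/- Let x_j = x_k + δ_j where x_k is a unit vector, ‖δ_j‖ = η₁ > 0, and |x_k^T δ_j| ≤ η₀η₁ with 2η₁η₀ < 1 + η₁². Then the alignment of x_j with its own perturbation direction satisfies trace(P_{span(x_j)} P_{span(δ_j)}) ≤ (η₁ + η₀)² / (1 + η₁² − 2η₁η₀). -/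
open Matrix

lemma trace_projVec_mul {n : ℕ} (u v : Fin n → ℝ) :
    (projVec u * projVec v).trace
      = (u ⬝ᵥ v)^2 / ((u ⬝ᵥ u) * (v ⬝ᵥ v)) := by
  simp only [projVec, Matrix.trace, Matrix.diag, Matrix.mul_apply, Matrix.smul_apply,
    Matrix.vecMulVec_apply, dotProduct, smul_eq_mul, div_eq_mul_inv, mul_inv]
  rw [sq, Finset.sum_mul_sum]
  rw [Finset.sum_mul]
  apply Finset.sum_congr rfl
  intro i _
  rw [Finset.sum_mul]
  apply Finset.sum_congr rfl
  intro j _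
  ring

/-- Let `x_j = x_k + δ` where `x_k` is a unit vector, `‖δ‖ = η₁ > 0`,
`|x_kᵀ δ| ≤ η₀η₁` and `2η₁η₀ < 1 + η₁²`. Then
`trace (P_{span x_j} P_{span δ}) ≤ (η₁ + η₀)²/(1 + η₁² − 2η₁η₀)`. -/
theorem stmt12 {n : ℕ} (xk δ : Fin n → ℝ) (η₀ η₁ : ℝ)
    (hxk : xk ⬝ᵥ xk = 1) (hδ : δ ⬝ᵥ δ = η₁ ^ 2) (hη₁ : 0 < η₁)
    (hcorr : |xk ⬝ᵥ δ| ≤ η₀ * η₁) (hsmall : 2 * η₁ * η₀ < 1 + η₁ ^ 2) :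
    (projVec (xk + δ) * projVec δ).trace
      ≤ (η₁ + η₀) ^ 2 / (1 + η₁ ^ 2 - 2 * η₁ * η₀) := by
  set c := xk ⬝ᵥ δ with hc
  have habs := abs_le.1 hcorr
  have hη₀ : 0 ≤ η₀ := by nlinarith [abs_nonneg c]
  have hdot1 : (xk + δ) ⬝ᵥ δ = c + η₁ ^ 2 := by
    rw [add_dotProduct, hδ]
  have hdot2 : (xk + δ) ⬝ᵥ (xk + δ) = 1 + 2 * c + η₁ ^ 2 := by
    rw [add_dotProduct, dotProduct_add, dotProduct_add, hxk, hδ, dotProduct_comm δ xk, ← hc]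
    ring
  rw [trace_projVec_mul, hdot1, hdot2, hδ]
  have hden : 0 < 1 + η₁ ^ 2 - 2 * η₁ * η₀ := by linarith
  have hpos : 0 < 1 + 2 * c + η₁ ^ 2 := by nlinarith [habs.1]
  have hden2 : 0 < (1 + 2 * c + η₁ ^ 2) * η₁ ^ 2 := mul_pos hpos (pow_pos hη₁ 2)
  rw [div_le_div_iff₀ hden2 hden]
  have h1 : (c + η₁ ^ 2) ^ 2 ≤ ((η₀ + η₁) * η₁) ^ 2 := by nlinarith [habs.1, habs.2]
  calc (c + η₁ ^ 2) ^ 2 * (1 + η₁ ^ 2 - 2 * η₁ * η₀)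
      ≤ ((η₀ + η₁) * η₁) ^ 2 * (1 + η₁ ^ 2 - 2 * η₁ * η₀) :=
        mul_le_mul_of_nonneg_right h1 hden.le
    _ = (η₁ + η₀) ^ 2 * ((1 + η₁ ^ 2 - 2 * η₁ * η₀) * η₁ ^ 2) := by ring
    _ ≤ (η₁ + η₀) ^ 2 * ((1 + 2 * c + η₁ ^ 2) * η₁ ^ 2) := by
        apply mul_le_mul_of_nonneg_left _ (sq_nonneg _)
        nlinarith [habs.1, sq_nonneg η₁]
end

section
/- Suppose X_S has pairwise orthogonal nonzero columns indexed by S, and P_avg = (1/B) Σ_ℓ P_{col(X_{S_ℓ})} where each S_ℓ ⊆ {1,…,p} and all columns of X are pairwise orthogonal. Then π(S) := σ_{|S|}(P_{col(X_S)} P_avg P_{col(X_S)}) equals min over j ∈ S of (1/B)·#{ℓ : j ∈ S_ℓ}, i.e., for orthogonal features the subspace stability reduces to the minimum selection proportion of the features in S. -/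
open Matrix

section Aux
open Polynomial

lemma charpoly_conj_aux {n : ℕ} (U D V : Matrix (Fin n) (Fin n) ℝ)
    (hUV : U * V = 1) (hVU : V * U = 1) : (U * D * V).charpoly = D.charpoly := by
  have hUV' : C.mapMatrix U * C.mapMatrix V = (1 : Matrix (Fin n) (Fin n) ℝ[X]) := by
    rw [← _root_.map_mul, hUV, _root_.map_one]
  have h1 : (U * D * V).charmatrix = C.mapMatrix U * D.charmatrix * C.mapMatrix V := by
    rw [charmatrix, charmatrix, Matrix.mul_sub, Matrix.sub_mul]
    congr 1
    · have hc : Commute (C.mapMatrix V) (Matrix.scalar (Fin n) (X : ℝ[X])) :=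
        (Matrix.scalar_commute (X : ℝ[X]) (fun r => Commute.all _ _) _).symm
      rw [mul_assoc, ← hc.eq, ← mul_assoc, hUV', one_mul]
    · rw [_root_.map_mul, _root_.map_mul]
  rw [Matrix.charpoly, Matrix.charpoly, h1, Matrix.det_mul, Matrix.det_mul]
  have hd : (C.mapMatrix U).det * (C.mapMatrix V).det = 1 := by
    rw [← Matrix.det_mul, hUV', Matrix.det_one]
  calc (C.mapMatrix U).det * D.charmatrix.det * (C.mapMatrix V).det
      = ((C.mapMatrix U).det * (C.mapMatrix V).det) * D.charmatrix.det := by ring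
    _ = D.charmatrix.det := by rw [hd, one_mul]

lemma charpoly_diagonal_aux {n : ℕ} (d : Fin n → ℝ) :
    (Matrix.diagonal d).charpoly = ∏ i, (X - C (d i)) := by
  rw [Matrix.charpoly, charmatrix]
  have : Matrix.scalar (Fin n) (X : ℝ[X]) - C.mapMatrix (Matrix.diagonal d)
      = Matrix.diagonal (fun i => X - C (d i)) := by
    ext i j
    by_cases h : i = j <;> simp [Matrix.scalar_apply, Matrix.diagonal_apply, h, Matrix.map_apply]
  rw [this, Matrix.det_diagonal]

lemma prod_X_sub_C_inj {n : ℕ} (f g : Fin n → ℝ)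
    (h : ∏ i, (X - C (f i)) = ∏ i, (X - C (g i))) :
    Multiset.map f Finset.univ.val = Multiset.map g Finset.univ.val := by
  have key : ∀ u : Fin n → ℝ, (∏ i, (X - C (u i))).roots = Multiset.map u Finset.univ.val := by
    intro u
    rw [Finset.prod]
    rw [show Multiset.map (fun i => X - C (u i)) Finset.univ.val
      = Multiset.map (fun a => X - C a) (Multiset.map u Finset.univ.val) by
        rw [Multiset.map_map]; rfl]
    exact roots_multiset_prod_X_sub_C _
  rw [← key f, ← key g, h]

lemma eig_multiset {n : ℕ} (M : Matrix (Fin n) (Fin n) ℝ) (hM : M.IsHermitian)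
    (U : Matrix (Fin n) (Fin n) ℝ) (d : Fin n → ℝ) (hU : Uᵀ * U = 1)
    (hMU : M = U * Matrix.diagonal d * Uᵀ) :
    Multiset.map hM.eigenvalues Finset.univ.val = Multiset.map d Finset.univ.val := by
  have h2 : M.charpoly = ∏ i, (X - C (d i)) := by
    rw [hMU, charpoly_conj_aux _ _ _ (mul_eq_one_comm.mp hU) hU, charpoly_diagonal_aux]
  have h1 : M.charpoly = ∏ i, (X - C (hM.eigenvalues i)) := by
    have hspec := hM.spectral_theorem
    have hu1 : (hM.eigenvectorUnitary : Matrix (Fin n) (Fin n) ℝ) *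
        star (hM.eigenvectorUnitary : Matrix (Fin n) (Fin n) ℝ) = 1 :=
      Matrix.mem_unitaryGroup_iff.mp hM.eigenvectorUnitary.2
    have hu2 : star (hM.eigenvectorUnitary : Matrix (Fin n) (Fin n) ℝ) *
        (hM.eigenvectorUnitary : Matrix (Fin n) (Fin n) ℝ) = 1 :=
      Matrix.mem_unitaryGroup_iff'.mp hM.eigenvectorUnitary.2
    have hco : (RCLike.ofReal ∘ hM.eigenvalues : Fin n → ℝ) = hM.eigenvalues := by
      ext i; simp
    conv_lhs => rw [hspec]
    rw [hco, Unitary.conjStarAlgAut_apply, charpoly_conj_aux _ _ _ hu1 hu2, charpoly_diagonal_aux]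
  rw [h2] at h1
  exact (prod_X_sub_C_inj _ _ h1).symm


lemma count_transfer {n : ℕ} (f g : Fin n → ℝ)
    (hmul : Multiset.map f Finset.univ.val = Multiset.map g Finset.univ.val)
    (p : ℝ → Prop) [DecidablePred p] :
    (Finset.univ.filter (fun i => p (f i))).card = (Finset.univ.filter (fun i => p (g i))).card := by
  have h1 : ∀ u : Fin n → ℝ, (Finset.univ.filter (fun i => p (u i))).card
      = Multiset.countP p (Multiset.map u Finset.univ.val) := by
    intro u
    rw [Multiset.countP_map, Finset.card_filter]
    simp [Multiset.countP_eq_card_filter, Finset.card_filter, Finset.filter]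
  rw [h1, h1, hmul]

lemma kthEig_eq_of_counts {n : ℕ} (A : Matrix (Fin n) (Fin n) ℝ) (hA : A.IsHermitian)
    (k : ℕ) (hk : 0 < k) (hkn : k ≤ n) (f : Fin n → ℝ) (m : ℝ)
    (hmul : Multiset.map hA.eigenvalues Finset.univ.val = Multiset.map f Finset.univ.val)
    (hlt : (Finset.univ.filter (fun i => f i < m)).card ≤ n - k)
    (hgt : (Finset.univ.filter (fun i => m < f i)).card ≤ k - 1) :
    kthEig A k = m := by
  have hcond : A.IsHermitian ∧ 0 < k ∧ k ≤ n := ⟨hA, hk, hkn⟩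
  rw [kthEig, dif_pos hcond]
  set σ := Tuple.sort hA.eigenvalues with hσ
  set g : Fin n → ℝ := fun i => hA.eigenvalues (σ i) with hg
  have hmono : Monotone g := Tuple.monotone_sort hA.eigenvalues
  have hmul2 : Multiset.map g Finset.univ.val = Multiset.map f Finset.univ.val := by
    rw [← hmul]
    have : Multiset.map g Finset.univ.val
        = Multiset.map hA.eigenvalues (Multiset.map (⇑σ) Finset.univ.val) := by
      rw [Multiset.map_map]; rfl
    rw [this]
    congr 1
    have : Multiset.map (⇑σ) Finset.univ.val = (Finset.univ.map σ.toEmbedding).val := rfl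
    rw [this, Finset.map_univ_equiv]
  set i0 : Fin n := ⟨n - k, by omega⟩ with hi0
  have hge : m ≤ g i0 := by
    by_contra hc
    push_neg at hc
    have hsub : Finset.Iic i0 ⊆ Finset.univ.filter (fun i => g i < m) := by
      intro i hi
      simp only [Finset.mem_Iic] at hi
      exact Finset.mem_filter.mpr ⟨Finset.mem_univ _, lt_of_le_of_lt (hmono hi) hc⟩
    have := Finset.card_le_card hsub
    rw [Fin.card_Iic, count_transfer g f hmul2 (fun x => x < m)] at this
    simp only [hi0] at this
    omega
  have hle : g i0 ≤ m := by
    by_contra hc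
    push_neg at hc
    have hsub : Finset.Ici i0 ⊆ Finset.univ.filter (fun i => m < g i) := by
      intro i hi
      simp only [Finset.mem_Ici] at hi
      exact Finset.mem_filter.mpr ⟨Finset.mem_univ _, lt_of_lt_of_le hc (hmono hi)⟩
    have := Finset.card_le_card hsub
    rw [Fin.card_Ici, count_transfer g f hmul2 (fun x => m < x)] at this
    simp only [hi0] at this
    omega
  exact le_antisymm hle hge

end Aux

/-- Suppose all columns of `X` are nonzero and pairwise orthogonal, so that
`P_{col(X_T)} = Σ_{j∈T} X_j X_jᵀ/‖X_j‖²` for every `T`. With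
`P_avg = (1/B) Σ_ℓ P_{col(X_{S_ℓ})}`, the stability
`π(S) = σ_{|S|}(P_{col(X_S)} P_avg P_{col(X_S)})` equals the minimum selection proportion
`min_{j ∈ S} (1/B)·#{ℓ : j ∈ S_ℓ}`. -/
theorem stmt19 {n p B : ℕ} (hB : 0 < B) (X : Matrix (Fin n) (Fin p) ℝ)
    (hnz : ∀ j : Fin p, (fun i => X i j) ≠ 0)
    (horth : ∀ j k : Fin p, j ≠ k → (fun i => X i j) ⬝ᵥ (fun i => X i k) = 0)
    (Sl : Fin B → Finset (Fin p)) (S : Finset (Fin p)) (hS : S.Nonempty) :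
    kthEig ((∑ j ∈ S, projVec (fun i => X i j)) *
        ((1 / (B : ℝ)) • ∑ ℓ, ∑ j ∈ Sl ℓ, projVec (fun i => X i j)) *
        (∑ j ∈ S, projVec (fun i => X i j))) S.card
      = S.inf' hS (fun j => ((Finset.univ.filter fun ℓ => j ∈ Sl ℓ).card : ℝ) / B) := by
  classical
  set v : Fin p → (Fin n → ℝ) := fun j => (fun i => X i j) with hv
  have hvpos : ∀ j, 0 < v j ⬝ᵥ v j := by
    intro j
    rcases lt_or_eq_of_le (Finset.sum_nonneg fun i _ => mul_self_nonneg (v j i)) with h | h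
    · exact h
    · exact absurd (dotProduct_self_eq_zero.mp h.symm) (hnz j)
  set N : Fin p → ℝ := fun j => Real.sqrt (v j ⬝ᵥ v j) with hNdef
  have hN : ∀ j, 0 < N j := fun j => Real.sqrt_pos.mpr (hvpos j)
  have hN2 : ∀ j, N j * N j = v j ⬝ᵥ v j := fun j => Real.mul_self_sqrt (hvpos j).le
  set u : Fin p → (Fin n → ℝ) := fun j i => (N j)⁻¹ * X i j with hu
  have hproj : ∀ j, projVec (v j) = vecMulVec (u j) (u j) := by
    intro j
    ext a b
    simp only [projVec, Matrix.smul_apply, vecMulVec_apply, smul_eq_mul, hu, hv]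
    rw [← hN2 j]
    have := (hN j).ne'
    field_simp
  have hudot : ∀ j k, u j ⬝ᵥ u k = ((N j)⁻¹ * (N k)⁻¹) * (v j ⬝ᵥ v k) := by
    intro j k
    simp only [dotProduct, hu, hv]
    rw [Finset.mul_sum]
    exact Finset.sum_congr rfl fun i _ => by ring
  have hid : ∀ j k, u j ⬝ᵥ u k = if j = k then 1 else 0 := by
    intro j k
    by_cases h : j = k
    · subst h
      rw [hudot, ← hN2 j, if_pos rfl]
      have := (hN j).ne'
      field_simp
    · rw [hudot, horth j k h, if_neg h, mul_zero]
  set Q : Fin p → Matrix (Fin n) (Fin n) ℝ := fun j => vecMulVec (u j) (u j) with hQ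
  have hQmul : ∀ j k, Q j * Q k = (u j ⬝ᵥ u k) • vecMulVec (u j) (u k) := by
    intro j k
    ext a b
    simp only [hQ, Matrix.mul_apply, vecMulVec_apply, Matrix.smul_apply, smul_eq_mul, dotProduct,
      Finset.sum_mul]
    exact Finset.sum_congr rfl fun i _ => by ring
  have hQQ : ∀ j, Q j * Q j = Q j := by
    intro j
    rw [hQmul, hid, if_pos rfl, one_smul]
  have hQO : ∀ j k, j ≠ k → Q j * Q k = 0 := by
    intro j k h
    rw [hQmul, hid, if_neg h, zero_smul]
  set P : Matrix (Fin n) (Fin n) ℝ := ∑ j ∈ S, Q j with hP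
  have hPQ : ∀ j, P * Q j = if j ∈ S then Q j else 0 := by
    intro j
    rw [hP, Finset.sum_mul]
    by_cases h : j ∈ S
    · rw [if_pos h]
      rw [Finset.sum_eq_single_of_mem j h (fun k _ hk => hQO k j hk)]
      exact hQQ j
    · rw [if_neg h]
      exact Finset.sum_eq_zero fun k hk => hQO k j (fun he => h (he ▸ hk))
  have hQP : ∀ j, Q j * P = if j ∈ S then Q j else 0 := by
    intro j
    rw [hP, Finset.mul_sum]
    by_cases h : j ∈ S
    · rw [if_pos h]
      rw [Finset.sum_eq_single_of_mem j h (fun k _ hk => hQO j k (Ne.symm hk))]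
      exact hQQ j
    · rw [if_neg h]
      exact Finset.sum_eq_zero fun k hk => hQO j k (fun he => h (he ▸ hk))
  set c : Fin p → ℝ := fun j => ((Finset.univ.filter fun ℓ => j ∈ Sl ℓ).card : ℝ) / B with hc
  have hc0 : ∀ j, 0 ≤ c j := fun j => by positivity
  set M : Matrix (Fin n) (Fin n) ℝ :=
    P * ((1 / (B : ℝ)) • ∑ ℓ, ∑ j ∈ Sl ℓ, Q j) * P with hM
  have hMeq : M = ∑ j ∈ S, c j • Q j := by
    rw [hM, Matrix.mul_smul, Matrix.smul_mul]
    have h1 : P * (∑ ℓ, ∑ j ∈ Sl ℓ, Q j) * P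
        = ∑ ℓ, ∑ j ∈ Sl ℓ, (P * Q j * P) := by
      simp only [Finset.mul_sum, Finset.sum_mul]
    rw [h1]
    have h2 : ∀ j, P * Q j * P = if j ∈ S then Q j else 0 := by
      intro j
      by_cases h : j ∈ S
      · rw [hPQ, if_pos h, hQP, if_pos h]
      · simp [hPQ, h]
    have h3 : ∀ ℓ, ∑ j ∈ Sl ℓ, (P * Q j * P)
        = ∑ j : Fin p, if j ∈ Sl ℓ then (if j ∈ S then Q j else 0) else 0 := by
      intro ℓ
      rw [Finset.sum_ite_mem, Finset.univ_inter]
      exact Finset.sum_congr rfl fun j _ => h2 j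
    simp only [h3]
    rw [Finset.sum_comm]
    have h4 : ∀ j : Fin p,
        (∑ ℓ, if j ∈ Sl ℓ then (if j ∈ S then Q j else 0) else 0)
        = ((Finset.univ.filter fun ℓ => j ∈ Sl ℓ).card : ℝ) • (if j ∈ S then Q j else 0) := by
      intro j
      rw [← Finset.sum_filter, Finset.sum_const]
      exact (Nat.cast_smul_eq_nsmul ℝ _ _).symm
    simp only [h4]
    rw [Finset.smul_sum]
    have h5 : ∀ j : Fin p,
        (1 / (B : ℝ)) • (((Finset.univ.filter fun ℓ => j ∈ Sl ℓ).card : ℝ) • (if j ∈ S then Q j else 0))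
        = if j ∈ S then c j • Q j else 0 := by
      intro j
      by_cases h : j ∈ S
      · rw [if_pos h, if_pos h, smul_smul, hc]
        congr 1
        ring
      · simp [h]
    simp only [h5]
    rw [Finset.sum_ite_mem, Finset.univ_inter]
  -- orthonormal family indexed by S
  set W : {j // j ∈ S} → EuclideanSpace ℝ (Fin n) := fun j => WithLp.toLp 2 (u j.1) with hW
  have hWinner : ∀ j k : {j // j ∈ S}, inner ℝ (W j) (W k) = (if j = k then (1:ℝ) else 0) := by
    intro j k
    have : (inner ℝ (W j) (W k) : ℝ) = u j.1 ⬝ᵥ u k.1 := by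
      simp [hW, PiLp.inner_apply, RCLike.inner_apply, dotProduct, mul_comm]
    rw [this, hid]
    by_cases h : j = k
    · rw [if_pos h, if_pos (by rw [h])]
    · rw [if_neg h, if_neg (fun he => h (Subtype.ext he))]
  have horthW : Orthonormal ℝ W := orthonormal_iff_ite.mpr hWinner
  have hcardS : S.card ≤ n := by
    have h1 := horthW.linearIndependent.fintype_card_le_finrank
    rwa [finrank_euclideanSpace_fin, Fintype.card_coe] at h1
  obtain ⟨e⟩ : Nonempty ({j // j ∈ S} ↪ Fin n) :=
    Function.Embedding.nonempty_of_card_le (by rwa [Fintype.card_coe, Fintype.card_fin])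
  have hchoose : ∀ (j : {j // j ∈ S}) (h : ∃ j', e j' = e j), h.choose = j :=
    fun j h => e.injective h.choose_spec
  set v0 : Fin n → EuclideanSpace ℝ (Fin n) :=
    fun i => if h : ∃ j, e j = i then W h.choose else 0 with hv0
  set d : Fin n → ℝ := fun i => if h : ∃ j, e j = i then c h.choose.1 else 0 with hd
  have hv0e : ∀ j : {j // j ∈ S}, v0 (e j) = W j := by
    intro j
    have h : ∃ j', e j' = e j := ⟨j, rfl⟩
    rw [hv0]
    simp only [dif_pos h, hchoose j h]
  have hde : ∀ j : {j // j ∈ S}, d (e j) = c j.1 := by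
    intro j
    have h : ∃ j', e j' = e j := ⟨j, rfl⟩
    rw [hd]
    simp only [dif_pos h, hchoose j h]
  have horthv0 : Orthonormal ℝ ((Set.range e).restrict v0) := by
    rw [orthonormal_iff_ite]
    rintro ⟨i, hi⟩ ⟨i', hi'⟩
    obtain ⟨j, rfl⟩ := hi
    obtain ⟨j', rfl⟩ := hi'
    change inner ℝ (v0 (e j)) (v0 (e j')) = _
    rw [hv0e, hv0e]
    rw [hWinner]
    by_cases h : j = j'
    · rw [if_pos h, if_pos (by rw [h])]
    · rw [if_neg h, if_neg (fun he => h (e.injective (Subtype.ext_iff.mp he)))]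
  obtain ⟨b, hb⟩ := horthv0.exists_orthonormalBasis_extension_of_card_eq
    (by rw [finrank_euclideanSpace_fin, Fintype.card_fin])
  set U : Matrix (Fin n) (Fin n) ℝ := Matrix.of (fun a i => b i a) with hU
  have hUU : Uᵀ * U = 1 := by
    ext i i'
    rw [Matrix.mul_apply, Matrix.one_apply]
    have : ∀ a, Uᵀ i a * U a i' = b i' a * b i a := fun a => by
      rw [Matrix.transpose_apply, hU]; simp [mul_comm]
    rw [Finset.sum_congr rfl fun a _ => this a]
    have := orthonormal_iff_ite.mp b.orthonormal i' i
    rw [PiLp.inner_apply] at this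
    simp only [RCLike.inner_apply, starRingEnd_apply, star_trivial] at this
    rw [show (∑ a, (b i').ofLp a * (b i).ofLp a) = ∑ a, (b i).ofLp a * (b i').ofLp a from
      Finset.sum_congr rfl fun a _ => mul_comm _ _, this]
    by_cases h : i = i'
    · rw [if_pos h, if_pos (h ▸ rfl)]
    · rw [if_neg h, if_neg (fun he => h he.symm)]
  set sfin : Finset (Fin n) := Finset.univ.map e with hsfin
  have hsfincard : sfin.card = S.card := by
    rw [hsfin, Finset.card_map, Finset.card_univ, Fintype.card_coe]
  have hmemsfin : ∀ i, i ∈ sfin ↔ ∃ j, e j = i := by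
    intro i
    rw [hsfin]
    simp [Finset.mem_map]
  have hMU : M = U * Matrix.diagonal d * Uᵀ := by
    rw [hMeq]
    ext a b'
    have hrhs : (U * Matrix.diagonal d * Uᵀ) a b' = ∑ i, d i * (b i a * b i b') := by
      rw [Matrix.mul_apply]
      refine Finset.sum_congr rfl fun i _ => ?_
      rw [Matrix.mul_diagonal, Matrix.transpose_apply, hU]
      simp only [Matrix.of_apply]
      ring
    rw [hrhs]
    have hzero : ∀ i ∈ Finset.univ, i ∉ sfin → d i * (b i a * b i b') = 0 := by
      intro i _ hi
      have hd0 : d i = 0 := by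
        rw [hd]
        exact dif_neg (fun h => hi ((hmemsfin i).mpr h))
      rw [hd0, zero_mul]
    rw [← Finset.sum_subset (Finset.subset_univ sfin) hzero, hsfin, Finset.sum_map]
    have hterm : ∀ j : {j // j ∈ S},
        d (e j) * (b (e j) a * b (e j) b') = c j.1 * (u j.1 a * u j.1 b') := by
      intro j
      have hbe : b (e j) = v0 (e j) := hb (e j) ⟨j, rfl⟩
      rw [hde, hbe, hv0e]
    rw [Finset.sum_congr rfl fun j _ => hterm j]
    have hlhs : (∑ j ∈ S, c j • Q j) a b' = ∑ j ∈ S, c j * (u j a * u j b') := by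
      rw [Matrix.sum_apply]
      exact Finset.sum_congr rfl fun j _ => by
        rw [Matrix.smul_apply, hQ]; simp only [vecMulVec_apply, smul_eq_mul]
    rw [hlhs, ← Finset.sum_coe_sort S (fun j => c j * (u j a * u j b'))]
  have hHerm : M.IsHermitian := by
    rw [hMeq]
    show (∑ j ∈ S, c j • Q j)ᴴ = ∑ j ∈ S, c j • Q j
    ext a b'
    rw [Matrix.conjTranspose_apply, Matrix.sum_apply, Matrix.sum_apply, star_trivial]
    refine Finset.sum_congr rfl fun j _ => ?_
    rw [Matrix.smul_apply, Matrix.smul_apply, hQ]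
    simp only [vecMulVec_apply, smul_eq_mul]
    ring
  set m : ℝ := S.inf' hS c with hm
  have hm0 : 0 ≤ m := Finset.le_inf' hS c fun j hj => hc0 j
  obtain ⟨j0, hj0S, hj0⟩ := Finset.exists_mem_eq_inf' hS c
  have hlt : (Finset.univ.filter (fun i => d i < m)).card ≤ n - S.card := by
    have hsub : Finset.univ.filter (fun i => d i < m) ⊆ sfinᶜ := by
      intro i hi
      rw [Finset.mem_compl]
      intro hmem
      obtain ⟨j, hj⟩ := (hmemsfin i).mp hmem
      have hdi : d i = c j.1 := by rw [← hj, hde]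
      have := (Finset.mem_filter.mp hi).2
      rw [hdi] at this
      exact absurd this (not_lt.mpr (Finset.inf'_le c j.2))
    have := Finset.card_le_card hsub
    rwa [Finset.card_compl, Fintype.card_fin, hsfincard] at this
  have hgt : (Finset.univ.filter (fun i => m < d i)).card ≤ S.card - 1 := by
    have hsub : Finset.univ.filter (fun i => m < d i) ⊆ sfin.erase (e ⟨j0, hj0S⟩) := by
      intro i hi
      have hmi := (Finset.mem_filter.mp hi).2
      have himem : i ∈ sfin := by
        by_contra hnot
        have hd0 : d i = 0 := by
          rw [hd]
          exact dif_neg (fun h => hnot ((hmemsfin i).mpr h))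
        rw [hd0] at hmi
        exact absurd hm0 (not_le.mpr hmi)
      refine Finset.mem_erase.mpr ⟨?_, himem⟩
      intro heq
      rw [heq, hde] at hmi
      rw [← hj0] at hmi
      exact lt_irrefl m hmi
    have := Finset.card_le_card hsub
    rwa [Finset.card_erase_of_mem ((hmemsfin _).mpr ⟨_, rfl⟩), hsfincard] at this
  have hPj : ∀ (T : Finset (Fin p)),
      (∑ j ∈ T, projVec (fun i => X i j)) = ∑ j ∈ T, Q j :=
    fun T => Finset.sum_congr rfl fun j _ => hproj j
  have hexpr : ((∑ j ∈ S, projVec (fun i => X i j)) *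
        ((1 / (B : ℝ)) • ∑ ℓ, ∑ j ∈ Sl ℓ, projVec (fun i => X i j)) *
        (∑ j ∈ S, projVec (fun i => X i j))) = M := by
    rw [hM, hP]
    congr 1
    · congr 1
      · exact hPj S
      · congr 1
        exact Finset.sum_congr rfl fun ℓ _ => hPj (Sl ℓ)
    · exact hPj S
  rw [hexpr]
  exact kthEig_eq_of_counts M hHerm S.card hS.card_pos hcardS d m
    (eig_multiset M hHerm U d hUU hMU) hlt hgt
end
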